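/- arXiv:0804.4618 — 2 statements merged into one kernel-verified Lean document; each statement's English description precedes it below -/
import Mathlib

section
/- (Mandelstam–Tamm inequality for mixed states.) Let ρ be a density operator on a finite-dimensional Hilbert space, Π the orthogonal projection onto the range of ρ, h self-adjoint, and P_ρ(t) = Tr(Π e^{−iht} ρ e^{iht}). Then for all t ∈ ℝ, |P′_ρ(t)| ≤ 2 (Δh)_ρ √(P_ρ(t)(1 − P_ρ(t))), where (Δh)²_ρ = Tr(h²ρ) − (Tr(hρ))². -/
open scoped InnerProductSpace
open Complex Filter Asymptotics

noncomputable section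

set_option linter.unusedSectionVars false
set_option maxHeartbeats 1000000

variable {H : Type*} [NormedAddCommGroup H] [InnerProductSpace ℂ H] [FiniteDimensional ℂ H]

/-- |φ⟩⟨ψ| -/
def ketbra (φ ψ : H) : H →L[ℂ] H := (innerSL ℂ ψ).smulRight φ

def tr (A : H →L[ℂ] H) : ℂ := LinearMap.trace ℂ H A.toLinearMap

/-- e^{-iht} -/
def timeEv (h : H →L[ℂ] H) (t : ℝ) : H →L[ℂ] H :=
  NormedSpace.exp ((-(Complex.I * (t : ℂ))) • h)

def expVec (h : H →L[ℂ] H) (φ : H) : ℝ := (⟪φ, h φ⟫_ℂ).re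
def varVec (h : H →L[ℂ] H) (φ : H) : ℝ := (⟪φ, h (h φ)⟫_ℂ).re - (expVec h φ) ^ 2
def expMix (h ρ : H →L[ℂ] H) : ℝ := (tr (h ∘L ρ)).re
def varMix (h ρ : H →L[ℂ] H) : ℝ := (tr (h ∘L h ∘L ρ)).re - (expMix h ρ) ^ 2
def survP (h : H →L[ℂ] H) (φ : H) (t : ℝ) : ℝ := ‖⟪φ, timeEv h t φ⟫_ℂ‖ ^ 2
def survPMix (h ρ Pr : H →L[ℂ] H) (t : ℝ) : ℝ :=
  (tr (Pr ∘L timeEv h t ∘L ρ ∘L timeEv h (-t))).re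

/-! ### Auxiliary trace lemmas -/

def trL : (H →L[ℂ] H) →ₗ[ℂ] ℂ := (LinearMap.trace ℂ H).comp (ContinuousLinearMap.coeLM ℂ)

lemma tr_add (A B : H →L[ℂ] H) : tr (A + B) = tr A + tr B := trL.map_add A B

lemma tr_sub (A B : H →L[ℂ] H) : tr (A - B) = tr A - tr B := trL.map_sub A B

lemma tr_smul (c : ℂ) (A : H →L[ℂ] H) : tr (c • A) = c * tr A := trL.map_smul c A

lemma tr_mul_comm (A B : H →L[ℂ] H) : tr (A * B) = tr (B * A) := by
  simp only [tr, ContinuousLinearMap.mul_def, ContinuousLinearMap.coe_comp,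
    ← Module.End.mul_eq_comp]
  exact LinearMap.trace_mul_comm ℂ _ _

lemma tr_eq_sum_inner {n : ℕ} (b : OrthonormalBasis (Fin n) ℂ H) (A : H →L[ℂ] H) :
    tr A = ∑ i, ⟪b i, A (b i)⟫_ℂ := by
  rw [tr, LinearMap.trace_eq_matrix_trace ℂ b.toBasis]
  simp [Matrix.trace, Matrix.diag, LinearMap.toMatrix_apply,
    OrthonormalBasis.coe_toBasis, OrthonormalBasis.coe_toBasis_repr_apply,
    OrthonormalBasis.repr_apply_apply]

lemma tr_star (A : H →L[ℂ] H) : tr (star A) = starRingEnd ℂ (tr A) := by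
  let b := stdOrthonormalBasis ℂ H
  rw [tr_eq_sum_inner b, tr_eq_sum_inner b, map_sum]
  congr 1; ext i
  rw [ContinuousLinearMap.star_eq_adjoint, ContinuousLinearMap.adjoint_inner_right,
    inner_conj_symm]

lemma real_tr_mul {X Y : H →L[ℂ] H} (hX : star X = X) (hY : star Y = Y) :
    (tr (X * Y)).im = 0 := by
  have hc : starRingEnd ℂ (tr (X * Y)) = tr (X * Y) := by
    rw [← tr_star, star_mul, hX, hY, tr_mul_comm]
  exact Complex.conj_eq_iff_im.mp hc

/-! ### Robertson-type inequality -/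

lemma robertson (σ A B : H →L[ℂ] H) (hσ : σ.IsPositive)
    (hA : IsSelfAdjoint A) (hB : IsSelfAdjoint B) :
    |(tr (A * B * σ)).im| ≤ Real.sqrt (tr (A * A * σ)).re * Real.sqrt (tr (B * B * σ)).re := by
  have hσsym : (σ : H →ₗ[ℂ] H).IsSymmetric := hσ.1
  let b := hσsym.eigenvectorBasis rfl
  let p : Fin (Module.finrank ℂ H) → ℝ := hσsym.eigenvalues rfl
  have hσb : ∀ i, σ (b i) = (p i : ℂ) • b i := fun i => hσsym.apply_eigenvectorBasis rfl i
  have hp : ∀ i, 0 ≤ p i := by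
    intro i
    have h2 := hσ.2 (b i)
    rw [ContinuousLinearMap.reApplyInnerSelf, hσb i, inner_smul_left,
      inner_self_eq_norm_sq_to_K, b.orthonormal.1 i] at h2
    simpa using h2
  have key : ∀ C D : H →L[ℂ] H, IsSelfAdjoint C →
      tr (C * D * σ) = ∑ i, (p i : ℂ) * ⟪C (b i), D (b i)⟫_ℂ := by
    intro C D hC
    rw [tr_eq_sum_inner b]
    congr 1; ext i
    rw [ContinuousLinearMap.mul_apply, ContinuousLinearMap.mul_apply, hσb i, map_smul, map_smul,
      inner_smul_right]
    exact congrArg (fun z => (p i : ℂ) * z) (hC.isSymmetric (b i) (D (b i))).symm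
  rw [key A B hA, key A A hA, key B B hB]
  have hre : ∀ C : H →L[ℂ] H,
      (∑ i, (p i : ℂ) * ⟪C (b i), C (b i)⟫_ℂ).re = ∑ i, p i * ‖C (b i)‖ ^ 2 := by
    intro C
    rw [Complex.re_sum]
    congr 1; ext i
    simp [inner_self_eq_norm_sq_to_K, Complex.re_ofReal_mul, ← Complex.ofReal_pow]
  rw [hre, hre, Complex.im_sum]
  calc |∑ i, ((p i : ℂ) * ⟪A (b i), B (b i)⟫_ℂ).im|
      ≤ ∑ i, |((p i : ℂ) * ⟪A (b i), B (b i)⟫_ℂ).im| := Finset.abs_sum_le_sum_abs _ _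
    _ ≤ ∑ i, Real.sqrt (p i * ‖A (b i)‖ ^ 2) * Real.sqrt (p i * ‖B (b i)‖ ^ 2) := by
        apply Finset.sum_le_sum
        intro i _
        have e : Real.sqrt (p i * ‖A (b i)‖ ^ 2) * Real.sqrt (p i * ‖B (b i)‖ ^ 2)
            = p i * (‖A (b i)‖ * ‖B (b i)‖) := by
          rw [Real.sqrt_mul (hp i), Real.sqrt_mul (hp i), Real.sqrt_sq (norm_nonneg _),
            Real.sqrt_sq (norm_nonneg _)]
          linear_combination (‖A (b i)‖ * ‖B (b i)‖) * Real.mul_self_sqrt (hp i)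
        rw [e, Complex.im_ofReal_mul, abs_mul, _root_.abs_of_nonneg (hp i)]
        have h1 : |(⟪A (b i), B (b i)⟫_ℂ).im| ≤ ‖A (b i)‖ * ‖B (b i)‖ :=
          (Complex.abs_im_le_norm _).trans
            (by exact norm_inner_le_norm _ _)
        exact mul_le_mul_of_nonneg_left h1 (hp i)
    _ ≤ _ := Real.sum_sqrt_mul_sqrt_le _ (fun i => mul_nonneg (hp i) (sq_nonneg _))
        (fun i => mul_nonneg (hp i) (sq_nonneg _))

/-! ### Time evolution lemmas -/

lemma timeEv_eq_exp_real (h : H →L[ℂ] H) (t : ℝ) :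
    timeEv h t = NormedSpace.exp (t • ((-Complex.I) • h)) := by
  rw [timeEv]
  congr 1
  rw [← smul_assoc]
  congr 1
  simp only [smul_eq_mul, Complex.real_smul]
  ring

lemma hasDerivAt_timeEv (h : H →L[ℂ] H) (t : ℝ) :
    HasDerivAt (fun s : ℝ => timeEv h s) (((-Complex.I) • h) * timeEv h t) t := by
  simp only [timeEv_eq_exp_real]
  exact hasDerivAt_exp_smul_const' (𝕂 := ℝ) ((-Complex.I) • h) t

lemma hasDerivAt_timeEv_neg (h : H →L[ℂ] H) (t : ℝ) :
    HasDerivAt (fun s : ℝ => timeEv h (-s)) (-(((-Complex.I) • h) * timeEv h (-t))) t := by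
  have h1 := (hasDerivAt_timeEv h (-t)).scomp t (hasDerivAt_neg t)
  rw [neg_one_smul ℝ] at h1
  exact h1

lemma timeEv_mul_timeEv (h : H →L[ℂ] H) (a b : ℝ) :
    timeEv h a * timeEv h b = timeEv h (a + b) := by
  have hrad : ∀ x : H →L[ℂ] H,
      x ∈ Metric.eball (0 : H →L[ℂ] H) (NormedSpace.expSeries ℂ (H →L[ℂ] H)).radius :=
    fun x => (NormedSpace.expSeries_radius_eq_top ℂ (H →L[ℂ] H)).symm ▸ edist_lt_top _ _
  rw [timeEv, timeEv, timeEv, ← NormedSpace.exp_add_of_commute_of_mem_ball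
    (((Commute.refl h).smul_left _).smul_right _) (hrad _) (hrad _), ← add_smul]
  congr 2
  push_cast
  ring

lemma timeEv_zero (h : H →L[ℂ] H) : timeEv h 0 = 1 := by
  simp only [timeEv, Complex.ofReal_zero, mul_zero, neg_zero, zero_smul]
  exact NormedSpace.exp_zero (𝔸 := H →L[ℂ] H)

lemma commute_timeEv (h : H →L[ℂ] H) (t : ℝ) : Commute h (timeEv h t) :=
  (((Commute.refl h).smul_right _)).exp_right

lemma star_timeEv {h : H →L[ℂ] H} (hsa : IsSelfAdjoint h) (t : ℝ) :
    star (timeEv h t) = timeEv h (-t) := by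
  rw [timeEv, timeEv, NormedSpace.star_exp, star_smul, hsa.star_eq]
  congr 1
  simp [Complex.conj_I]

/-! ### Main inequality at fixed time -/

lemma aux_main (h ρ Pr U V : H →L[ℂ] H) (hsa : star h = h)
    (hρ : ρ.IsPositive) (hρtr : tr ρ = 1) (hPr : star Pr = Pr) (hPrid : Pr * Pr = Pr)
    (hVU : V * U = 1) (hstarU : star U = V) (hcommU : h * U = U * h) :
    2 * |(tr (Pr * (h * (U * (ρ * V))))).im|
      ≤ 2 * Real.sqrt (varMix h ρ) *
        Real.sqrt ((tr (Pr * (U * (ρ * V)))).re * (1 - (tr (Pr * (U * (ρ * V)))).re)) := by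
  have hρsa : star ρ = ρ := hρ.isSelfAdjoint.star_eq
  have hσpos : (U * (ρ * V)).IsPositive := by
    have h1 := hρ.conj_adjoint U
    rwa [← ContinuousLinearMap.star_eq_adjoint, hstarU] at h1
  have hσstar : star (U * (ρ * V)) = U * (ρ * V) := hσpos.isSelfAdjoint.star_eq
  set P : ℝ := (tr (Pr * (U * (ρ * V)))).re with hP
  set c : ℝ := expMix h ρ with hc
  have key2 : ∀ D : H →L[ℂ] H, tr (U * (D * V)) = tr D := by
    intro D
    rw [tr_mul_comm, mul_assoc, hVU, mul_one]
  have e_gen : ∀ D : H →L[ℂ] H, h * (U * (D * V)) = U * ((h * D) * V) := by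
    intro D
    rw [← mul_assoc, hcommU, mul_assoc, ← mul_assoc h D V]
  have trσ : tr (U * (ρ * V)) = 1 := by rw [key2, hρtr]
  have tr_hσ : tr (h * (U * (ρ * V))) = tr (h * ρ) := by rw [e_gen, key2]
  have tr_hhσ : tr (h * (h * (U * (ρ * V)))) = tr (h * (h * ρ)) := by
    rw [e_gen ρ, e_gen (h * ρ), key2]
  have hc_im : (tr (h * ρ)).im = 0 := real_tr_mul hsa hρsa
  have hc_re : (tr (h * ρ)).re = c := rfl
  have hPrσ_im : (tr (Pr * (U * (ρ * V)))).im = 0 := real_tr_mul hPr hσstar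
  have hA' : IsSelfAdjoint (Pr - (P : ℂ) • 1) := by
    have : star (Pr - (P : ℂ) • 1) = Pr - (P : ℂ) • 1 := by
      rw [star_sub, hPr, star_smul, star_one, Complex.star_def, Complex.conj_ofReal]
    exact this
  have hB' : IsSelfAdjoint (h - (c : ℂ) • 1) := by
    have : star (h - (c : ℂ) • 1) = h - (c : ℂ) • 1 := by
      rw [star_sub, hsa, star_smul, star_one, Complex.star_def, Complex.conj_ofReal]
    exact this
  have rob := robertson (U * (ρ * V)) _ _ hσpos hA' hB'
  have expand1 : (Pr - (P : ℂ) • 1) * (h - (c : ℂ) • 1) * (U * (ρ * V))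
      = Pr * (h * (U * (ρ * V))) - (c : ℂ) • (Pr * (U * (ρ * V)))
        - (P : ℂ) • (h * (U * (ρ * V))) + ((P * c : ℝ) : ℂ) • (U * (ρ * V)) := by
    push_cast
    simp only [sub_mul, mul_sub, smul_mul_assoc, one_mul, mul_smul_comm, smul_smul, mul_assoc]
    module
  have expand2 : (Pr - (P : ℂ) • 1) * (Pr - (P : ℂ) • 1) * (U * (ρ * V))
      = Pr * (Pr * (U * (ρ * V))) - ((2 * P : ℝ) : ℂ) • (Pr * (U * (ρ * V)))
        + ((P * P : ℝ) : ℂ) • (U * (ρ * V)) := by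
    push_cast
    simp only [sub_mul, mul_sub, smul_mul_assoc, one_mul, mul_one, mul_smul_comm, smul_smul,
      mul_assoc]
    module
  have hPP : Pr * (Pr * (U * (ρ * V))) = Pr * (U * (ρ * V)) := by rw [← mul_assoc, hPrid]
  have expand3 : (h - (c : ℂ) • 1) * (h - (c : ℂ) • 1) * (U * (ρ * V))
      = h * (h * (U * (ρ * V))) - ((2 * c : ℝ) : ℂ) • (h * (U * (ρ * V)))
        + ((c * c : ℝ) : ℂ) • (U * (ρ * V)) := by
    push_cast
    simp only [sub_mul, mul_sub, smul_mul_assoc, one_mul, mul_one, mul_smul_comm, smul_smul,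
      mul_assoc]
    module
  have re2 : (tr ((Pr - (P : ℂ) • 1) * (Pr - (P : ℂ) • 1) * (U * (ρ * V)))).re = P * (1 - P) := by
    rw [expand2, hPP, tr_add, tr_sub, tr_smul, tr_smul, trσ]
    simp only [Complex.sub_re, Complex.add_re, Complex.re_ofReal_mul, Complex.one_re, mul_one,
      ← hP, Complex.ofReal_re]
    ring
  have re3 : (tr ((h - (c : ℂ) • 1) * (h - (c : ℂ) • 1) * (U * (ρ * V)))).re = varMix h ρ := by
    rw [expand3, tr_add, tr_sub, tr_smul, tr_smul, trσ, tr_hhσ, tr_hσ]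
    have e9 : tr (h * (h * ρ)) = tr (h ∘L h ∘L ρ) := rfl
    simp only [Complex.sub_re, Complex.add_re, Complex.re_ofReal_mul, Complex.one_re, mul_one,
      hc_re, e9, Complex.ofReal_re]
    rw [varMix, ← hc]
    ring
  have im1 : (tr (Pr * (h * (U * (ρ * V))))).im
      = (tr ((Pr - (P : ℂ) • 1) * (h - (c : ℂ) • 1) * (U * (ρ * V)))).im := by
    rw [expand1, tr_add, tr_sub, tr_sub, tr_smul, tr_smul, tr_smul, trσ, tr_hσ]
    simp [Complex.sub_im, Complex.add_im, Complex.im_ofReal_mul, hc_im, hPrσ_im]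
  rw [im1]
  rw [re2, re3] at rob
  calc 2 * |(tr ((Pr - (P : ℂ) • 1) * (h - (c : ℂ) • 1) * (U * (ρ * V)))).im|
      ≤ 2 * (Real.sqrt (P * (1 - P)) * Real.sqrt (varMix h ρ)) := by linarith
    _ = 2 * Real.sqrt (varMix h ρ) * Real.sqrt (P * (1 - P)) := by ring

/-! ### Derivative of the survival probability -/

instance : FiniteDimensional ℂ (H →L[ℂ] H) :=
  FiniteDimensional.of_injective (ContinuousLinearMap.coeLM ℂ : (H →L[ℂ] H) →ₗ[ℂ] (H →ₗ[ℂ] H))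
    (fun _ _ hfg => ContinuousLinearMap.coe_injective hfg)

lemma hasDerivAt_survPMix (h ρ Pr : H →L[ℂ] H) (hsa : IsSelfAdjoint h) (hρsa : star ρ = ρ)
    (hPr : star Pr = Pr) (t : ℝ) :
    HasDerivAt (survPMix h ρ Pr)
      (2 * (tr (Pr * (h * (timeEv h t * (ρ * timeEv h (-t)))))).im) t := by
  have hσstar : star (timeEv h t * (ρ * timeEv h (-t))) = timeEv h t * (ρ * timeEv h (-t)) := by
    rw [star_mul, star_mul, hρsa, star_timeEv hsa, star_timeEv hsa, neg_neg, mul_assoc]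
  set L : (H →L[ℂ] H) →L[ℝ] ℝ :=
    Complex.reCLM.comp ((LinearMap.toContinuousLinearMap trL).restrictScalars ℝ) with hL
  have hF : HasDerivAt (fun s : ℝ => Pr * (timeEv h s * (ρ * timeEv h (-s))))
      (Pr * ((((-Complex.I) • h) * timeEv h t) * (ρ * timeEv h (-t))
        + timeEv h t * (ρ * -(((-Complex.I) • h) * timeEv h (-t))))) t :=
    HasDerivAt.const_mul Pr ((hasDerivAt_timeEv h t).mul
      (HasDerivAt.const_mul ρ (hasDerivAt_timeEv_neg h t)))
  have hD : HasDerivAt (survPMix h ρ Pr)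
      (L (Pr * ((((-Complex.I) • h) * timeEv h t) * (ρ * timeEv h (-t))
        + timeEv h t * (ρ * -(((-Complex.I) • h) * timeEv h (-t)))))) t :=
    L.hasFDerivAt.comp_hasDerivAt t hF
  have hw : tr (Pr * ((timeEv h t * (ρ * timeEv h (-t))) * h))
      = starRingEnd ℂ (tr (Pr * (h * (timeEv h t * (ρ * timeEv h (-t)))))) := by
    rw [← tr_star, star_mul, star_mul, hPr, hsa.star_eq, hσstar, tr_mul_comm, mul_assoc]
  have hDval : Pr * ((((-Complex.I) • h) * timeEv h t) * (ρ * timeEv h (-t))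
        + timeEv h t * (ρ * -(((-Complex.I) • h) * timeEv h (-t))))
      = (-Complex.I) • (Pr * (h * (timeEv h t * (ρ * timeEv h (-t)))))
        - (-Complex.I) • (Pr * ((timeEv h t * (ρ * timeEv h (-t))) * h)) := by
    have hcV : h * timeEv h (-t) = timeEv h (-t) * h := (commute_timeEv h (-t)).eq
    simp only [neg_mul, mul_neg, neg_smul, smul_neg, smul_mul_assoc, mul_smul_comm, mul_add,
      mul_assoc]
    rw [hcV]
    module
  have hLval : L (Pr * ((((-Complex.I) • h) * timeEv h t) * (ρ * timeEv h (-t))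
        + timeEv h t * (ρ * -(((-Complex.I) • h) * timeEv h (-t)))))
      = 2 * (tr (Pr * (h * (timeEv h t * (ρ * timeEv h (-t)))))).im := by
    show (tr _).re = _
    rw [hDval, tr_sub, tr_smul, tr_smul, hw, ← mul_sub, Complex.sub_conj]
    have : -Complex.I * (((2 * (tr (Pr * (h * (timeEv h t * (ρ * timeEv h (-t)))))).im : ℝ) : ℂ)
        * Complex.I) = ((2 * (tr (Pr * (h * (timeEv h t * (ρ * timeEv h (-t)))))).im : ℝ) : ℂ) := by
      linear_combination (-((2 * (tr (Pr * (h * (timeEv h t * (ρ * timeEv h (-t)))))).im : ℝ) : ℂ))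
        * Complex.I_mul_I
    rw [this, Complex.ofReal_re]
  rw [← hLval]
  exact hD

theorem stmt16 (h ρ Pr : H →L[ℂ] H) (hsa : IsSelfAdjoint h)
    (hρpos : ρ.IsPositive) (hρtr : tr ρ = 1)
    (hPrsa : IsSelfAdjoint Pr) (hPrid : IsIdempotentElem Pr)
    (hPrrange : LinearMap.range Pr.toLinearMap = LinearMap.range ρ.toLinearMap) :
    ∀ t : ℝ, |deriv (survPMix h ρ Pr) t|
      ≤ 2 * Real.sqrt (varMix h ρ)
          * Real.sqrt (survPMix h ρ Pr t * (1 - survPMix h ρ Pr t)) := by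
  intro t
  have hVU : timeEv h (-t) * timeEv h t = 1 := by
    rw [timeEv_mul_timeEv]
    norm_num [timeEv_zero]
  have hd := hasDerivAt_survPMix h ρ Pr hsa hρpos.isSelfAdjoint.star_eq hPrsa.star_eq t
  rw [hd.deriv, abs_mul, _root_.abs_two]
  have hsurv : survPMix h ρ Pr t = (tr (Pr * (timeEv h t * (ρ * timeEv h (-t))))).re := rfl
  rw [hsurv]
  exact aux_main h ρ Pr (timeEv h t) (timeEv h (-t)) hsa.star_eq hρpos hρtr
    hPrsa.star_eq hPrid hVU (star_timeEv hsa t) ((commute_timeEv h t).eq)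
end
end

section
/- (Fleming's bound for mixed states.) Let ρ be a density operator on a finite-dimensional Hilbert space, Π the orthogonal projection onto the range of ρ, and h self-adjoint. Then Tr(Π e^{−iht} ρ e^{iht}) ≥ cos²((Δh)_ρ t) for all real t with (Δh)_ρ |t| ≤ π/2, where (Δh)²_ρ = Tr(h²ρ) − (Tr(hρ))². -/
open scoped InnerProductSpace
open Complex Filter Asymptotics

noncomputable section

variable {H : Type*} [NormedAddCommGroup H] [InnerProductSpace ℂ H] [FiniteDimensional ℂ H]

open Real in
lemma fb_sinc_left {x s : ℝ} (hx : 0 ≤ x) (hxs : x ≤ s) (hs : s ≤ π) :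
    x * Real.sin s ≤ s * Real.sin x := by
  rcases eq_or_lt_of_le (hx.trans hxs) with h0 | h0
  · have hx0 : x = 0 := le_antisymm (hxs.trans h0.symm.le) hx
    simp [hx0, ← h0]
  have hcc := strictConcaveOn_sin_Icc.concaveOn
  have h1 : Real.sin ((x/s) • s + (1 - x/s) • (0:ℝ)) ≥ (x/s) * Real.sin s + (1 - x/s) * Real.sin 0 := by
    apply hcc.2 (Set.mem_Icc.2 ⟨(hx.trans hxs), hs⟩) (Set.mem_Icc.2 ⟨le_rfl, pi_nonneg⟩)
      (by positivity) (by rw [sub_nonneg]; exact div_le_one_of_le₀ hxs (hx.trans hxs)) (by ring)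
  rw [smul_eq_mul, smul_eq_mul, mul_zero, add_zero, div_mul_cancel₀ _ h0.ne'] at h1
  rw [Real.sin_zero, mul_zero, add_zero] at h1
  calc x * Real.sin s = s * ((x/s) * Real.sin s) := by field_simp
  _ ≤ s * Real.sin x := by nlinarith

open Real in
lemma fb_sinc_right {x s : ℝ} (hs : 0 ≤ s) (hsx : s ≤ x) (hs2 : s ≤ π/2) :
    s * Real.sin x ≤ x * Real.sin s := by
  rcases le_or_gt x π with hxpi | hxpi
  · exact fb_sinc_left hs hsx hxpi
  · have h1 : 2/π * s ≤ Real.sin s := Real.mul_le_sin hs hs2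
    have h2 : Real.sin x ≤ 1 := Real.sin_le_one x
    have hpi := Real.pi_pos
    have hss : 0 ≤ Real.sin s := le_trans (by positivity) h1
    calc s * Real.sin x ≤ s := by nlinarith
    _ ≤ 2 * s := by linarith
    _ = π * (2/π*s) := by field_simp
    _ ≤ π * Real.sin s := by nlinarith
    _ ≤ x * Real.sin s := by nlinarith

open Real in
lemma fb_key_cos {s : ℝ} (hs0 : 0 < s) (hs : s ≤ π/2) (x : ℝ) :
    2*s*Real.cos s + Real.sin s * s^2 ≤ 2*s*Real.cos x + Real.sin s * x^2 := by
  set G : ℝ → ℝ := fun y => 2*s*Real.cos y + Real.sin s * y^2 with hG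
  have hderiv : ∀ y, HasDerivAt G (2*(y * Real.sin s - s * Real.sin y)) y := by
    intro y
    have h1 : HasDerivAt (fun y => 2*s*Real.cos y) (2*s*(-Real.sin y)) y :=
      (Real.hasDerivAt_cos y).const_mul (2*s)
    have h2 : HasDerivAt (fun y : ℝ => Real.sin s * y^2) (Real.sin s * (2*y)) y := by
      simpa using ((hasDerivAt_pow 2 y).const_mul (Real.sin s))
    exact (h1.add h2).congr_deriv (by ring)
  have hGeven : ∀ y, G (-y) = G y := by intro y; simp [hG]
  have key : ∀ y, 0 ≤ y → G s ≤ G y := by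
    intro y hy
    rcases le_or_gt y s with hys | hys
    · have hanti : AntitoneOn G (Set.Icc 0 s) := by
        apply antitoneOn_of_deriv_nonpos (convex_Icc 0 s)
          (Continuous.continuousOn (by fun_prop))
          (fun z hz => (hderiv z).differentiableAt.differentiableWithinAt)
        intro z hz
        rw [interior_Icc] at hz
        rw [(hderiv z).deriv]
        have hπ : s ≤ π := hs.trans (by linarith [Real.pi_pos])
        have := fb_sinc_left hz.1.le hz.2.le hπ
        linarith
      exact hanti (Set.mem_Icc.2 ⟨hy, hys⟩) (Set.mem_Icc.2 ⟨hs0.le, le_rfl⟩) hys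
    · have hmono : MonotoneOn G (Set.Icc s y) := by
        apply monotoneOn_of_deriv_nonneg (convex_Icc s y)
          (Continuous.continuousOn (by fun_prop))
          (fun z hz => (hderiv z).differentiableAt.differentiableWithinAt)
        intro z hz
        rw [interior_Icc] at hz
        rw [(hderiv z).deriv]
        have := fb_sinc_right hs0.le hz.1.le hs
        linarith
      exact hmono (Set.mem_Icc.2 ⟨le_rfl, hys.le⟩) (Set.mem_Icc.2 ⟨hys.le, le_rfl⟩) hys.le
  show G s ≤ G x
  rcases le_or_gt 0 x with hx | hx
  · exact key x hx
  · rw [← hGeven x]; exact key (-x) (by linarith)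

open Real in
lemma fb_weighted_cos {ι : Type*} [Fintype ι] (q x : ι → ℝ) (hq : ∀ i, 0 ≤ q i)
    (hq1 : ∑ i, q i = 1) {s : ℝ} (hs0 : 0 ≤ s) (hs : s ≤ π/2)
    (hx : ∑ i, q i * (x i)^2 = s^2) :
    Real.cos s ≤ ∑ i, q i * Real.cos (x i) := by
  rcases eq_or_lt_of_le hs0 with h0 | h0
  · have hpt : ∀ i, q i * (1 - (x i)^2/2) ≤ q i * Real.cos (x i) := fun i =>
      mul_le_mul_of_nonneg_left (Real.one_sub_sq_div_two_le_cos) (hq i)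
    have hsum := Finset.sum_le_sum (fun i (_ : i ∈ Finset.univ) => hpt i)
    rw [← h0, Real.cos_zero]
    have heq : ∑ i, q i * (1 - (x i)^2/2) = 1 - s^2/2 := by
      have : ∀ i ∈ Finset.univ, q i * (1 - (x i)^2/2) = q i - (q i * (x i)^2)/2 :=
        fun i _ => by ring
      rw [Finset.sum_congr rfl this, Finset.sum_sub_distrib, hq1, ← Finset.sum_div, hx]
    rw [heq] at hsum
    have : s^2 = 0 := by rw [← h0]; ring
    linarith
  · have hpt : ∀ i, q i * (2*s*Real.cos s + Real.sin s * s^2)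
        ≤ q i * (2*s*Real.cos (x i) + Real.sin s * (x i)^2) := fun i =>
      mul_le_mul_of_nonneg_left (fb_key_cos h0 hs (x i)) (hq i)
    have hsum := Finset.sum_le_sum (fun i (_ : i ∈ Finset.univ) => hpt i)
    have hL : ∑ i, q i * (2*s*Real.cos s + Real.sin s * s^2)
        = 2*s*Real.cos s + Real.sin s * s^2 := by
      rw [← Finset.sum_mul, hq1, one_mul]
    have hR : ∑ i, q i * (2*s*Real.cos (x i) + Real.sin s * (x i)^2)
        = 2*s*(∑ i, q i * Real.cos (x i)) + Real.sin s * s^2 := by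
      rw [← hx]
      rw [Finset.mul_sum, Finset.mul_sum, ← Finset.sum_add_distrib]
      exact Finset.sum_congr rfl (fun i _ => by ring)
    rw [hL, hR] at hsum
    nlinarith

lemma fb_tr_eq_sum {ι : Type*} [Fintype ι] [DecidableEq ι] (b : OrthonormalBasis ι ℂ H)
    (A : H →L[ℂ] H) : tr A = ∑ i, ⟪b i, A (b i)⟫_ℂ := by
  rw [tr, LinearMap.trace_eq_matrix_trace ℂ b.toBasis, Matrix.trace]
  congr 1
  ext i
  rw [Matrix.diag_apply, LinearMap.toMatrix_apply, b.coe_toBasis_repr_apply,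
    b.repr_apply_apply, b.coe_toBasis]
  rfl

lemma fb_exp_apply_eigen (A : H →L[ℂ] H) (c : ℂ) (v : H) (hv : A v = c • v) :
    NormedSpace.exp A v = Complex.exp c • v := by
  have hpow : ∀ n : ℕ, (A ^ n) v = c ^ n • v := by
    intro n
    induction n with
    | zero => simp
    | succ n ih =>
      rw [pow_succ, ContinuousLinearMap.mul_apply, hv, map_smul, ih, smul_smul,
        ← pow_succ']
  have hsummable : Summable fun n : ℕ => ((Nat.factorial n : ℂ))⁻¹ • A ^ n :=
    NormedSpace.expSeries_summable' A
  have h1 : NormedSpace.exp A v = ∑' n : ℕ, (((Nat.factorial n : ℂ))⁻¹ • A ^ n) v := by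
    rw [NormedSpace.exp_eq_tsum (𝕂 := ℂ)]
    exact ((ContinuousLinearMap.apply ℂ H v).map_tsum hsummable)
  rw [h1]
  have h2 : ∀ n : ℕ, (((Nat.factorial n : ℂ))⁻¹ • A ^ n) v
      = (((Nat.factorial n : ℂ))⁻¹ * c ^ n) • v := by
    intro n
    rw [ContinuousLinearMap.smul_apply, hpow, smul_smul]
  simp_rw [h2]
  have hsc : Summable fun n : ℕ => ((Nat.factorial n : ℂ))⁻¹ * c ^ n :=
    ((NormedSpace.expSeries_summable' (𝕂 := ℂ) c).congr (fun n => by simp [smul_eq_mul]))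
  rw [hsc.tsum_smul_const]
  congr 1
  rw [Complex.exp_eq_exp_ℂ, NormedSpace.exp_eq_tsum (𝕂 := ℂ)]
  simp [smul_eq_mul]

lemma fb_timeEv_eigen (h : H →L[ℂ] H) (t : ℝ) (E : ℝ) (v : H) (hv : h v = (E:ℂ) • v) :
    timeEv h t v = Complex.exp (-(Complex.I * t * E)) • v := by
  rw [timeEv, fb_exp_apply_eigen _ (-(Complex.I * t * E)) v]
  rw [ContinuousLinearMap.smul_apply, hv, smul_smul]
  ring_nf

lemma fb_star_timeEv (h : H →L[ℂ] H) (hsa : IsSelfAdjoint h) (t : ℝ) :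
    star (timeEv h t) = timeEv h (-t) := by
  rw [timeEv, timeEv, NormedSpace.star_exp]
  congr 1
  rw [star_smul, hsa.star_eq]
  congr 1
  simp [star, Complex.ext_iff]

lemma fb_timeEv_adjoint_inner (h : H →L[ℂ] H) (hsa : IsSelfAdjoint h) (t : ℝ) (x y : H) :
    ⟪x, timeEv h (-t) y⟫_ℂ = ⟪timeEv h t x, y⟫_ℂ := by
  rw [← fb_star_timeEv h hsa t, ContinuousLinearMap.star_eq_adjoint,
    ContinuousLinearMap.adjoint_inner_right]

lemma fb_tr_comp_comm (A B : H →L[ℂ] H) : tr (A ∘L B) = tr (B ∘L A) := by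
  rw [tr, tr, ContinuousLinearMap.toLinearMap_comp, ContinuousLinearMap.toLinearMap_comp,
    LinearMap.trace_comp_comm']


theorem stmt17 (h ρ Pr : H →L[ℂ] H) (hsa : IsSelfAdjoint h)
    (hρpos : ρ.IsPositive) (hρtr : tr ρ = 1)
    (hPrsa : IsSelfAdjoint Pr) (hPrid : IsIdempotentElem Pr)
    (hPrrange : LinearMap.range Pr.toLinearMap = LinearMap.range ρ.toLinearMap) :
    ∀ t : ℝ, Real.sqrt (varMix h ρ) * |t| ≤ Real.pi / 2 →
      survPMix h ρ Pr t ≥ Real.cos (Real.sqrt (varMix h ρ) * t) ^ 2 := by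
  intro t ht
  classical
  have hρsa : IsSelfAdjoint ρ := hρpos.isSelfAdjoint
  have hρsym := hρsa.isSymmetric
  have hhsym := hsa.isSymmetric
  have hPrsym := hPrsa.isSymmetric
  have hfr : Module.finrank ℂ H = Module.finrank ℂ H := rfl
  set v := hρsym.eigenvectorBasis hfr with hvdef
  set p := hρsym.eigenvalues hfr with hpdef
  have hvp : ∀ i, ρ (v i) = (p i : ℂ) • v i := fun i => hρsym.apply_eigenvectorBasis hfr i
  set e := hhsym.eigenvectorBasis hfr with hedef
  set E := hhsym.eigenvalues hfr with hEdef
  have heE : ∀ k, h (e k) = (E k : ℂ) • e k := fun k => hhsym.apply_eigenvectorBasis hfr k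
  set U := timeEv h t with hUdef
  have hhs : ∀ x y : H, ⟪h x, y⟫_ℂ = ⟪x, h y⟫_ℂ := fun x y => hhsym x y
  have hρs : ∀ x y : H, ⟪ρ x, y⟫_ℂ = ⟪x, ρ y⟫_ℂ := fun x y => hρsym x y
  have hPrs : ∀ x y : H, ⟪Pr x, y⟫_ℂ = ⟪x, Pr y⟫_ℂ := fun x y => hPrsym x y
  have hvnorm : ∀ i, ⟪v i, v i⟫_ℂ = 1 := fun i => by
    rw [inner_self_eq_norm_sq_to_K, v.orthonormal.1 i]; norm_num
  have hvnorm' : ∀ i, ‖v i‖ = 1 := fun i => v.orthonormal.1 i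
  -- q values
  set q : Fin (Module.finrank ℂ H) → ℝ := fun k => (⟪e k, ρ (e k)⟫_ℂ).re with hqdef
  have hqc : ∀ k, ⟪e k, ρ (e k)⟫_ℂ = (q k : ℂ) := by
    intro k
    have h1 : (starRingEnd ℂ) ⟪e k, ρ (e k)⟫_ℂ = ⟪e k, ρ (e k)⟫_ℂ := by
      rw [inner_conj_symm]
      exact hρs (e k) (e k)
    rw [Complex.conj_eq_iff_re.mp h1]
  have hqnn : ∀ k, 0 ≤ q k := fun k => (Complex.nonneg_iff.mp (hρpos.inner_nonneg_right (e k))).1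
  have hq1 : ∑ k, q k = 1 := by
    have h2 := congrArg Complex.re (fb_tr_eq_sum e ρ).symm
    rw [Complex.re_sum, hρtr] at h2
    simpa using h2
  -- expMix in terms of q, E
  have hEbar : expMix h ρ = ∑ k, q k * E k := by
    rw [expMix, fb_tr_eq_sum e, Complex.re_sum]
    congr 1; ext k
    rw [ContinuousLinearMap.comp_apply, ← hhs (e k) (ρ (e k)), heE k,
      inner_smul_left, hqc k, Complex.conj_ofReal]
    push_cast
    simp [mul_comm]
  set Ebar := expMix h ρ with hEbardef
  -- varMix
  have hvar2 : (tr (h ∘L h ∘L ρ)).re = ∑ k, q k * (E k)^2 := by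
    rw [fb_tr_eq_sum e, Complex.re_sum]
    congr 1; ext k
    rw [ContinuousLinearMap.comp_apply, ContinuousLinearMap.comp_apply,
      ← hhs (e k) (h (ρ (e k))), heE k, inner_smul_left, ← hhs (e k) (ρ (e k)), heE k,
      inner_smul_left, hqc k, Complex.conj_ofReal]
    rw [show ((E k : ℂ) * ((E k : ℂ) * (q k : ℂ))) = (((q k * (E k)^2 : ℝ)) : ℂ) by
      push_cast; ring]
    rw [Complex.ofReal_re]
  have hvarq : varMix h ρ = ∑ k, q k * (E k - Ebar)^2 := by
    rw [varMix, hvar2, ← hEbardef]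
    have hexp : ∑ k, q k * (E k - Ebar)^2
        = ∑ k, (q k * (E k)^2 - 2 * Ebar * (q k * E k) + Ebar^2 * q k) := by
      congr 1; ext k; ring
    rw [hexp, Finset.sum_add_distrib, Finset.sum_sub_distrib, ← Finset.mul_sum,
      ← Finset.mul_sum, ← hEbar, hq1]
    ring
  have hvarnn : 0 ≤ varMix h ρ := by
    rw [hvarq]; exact Finset.sum_nonneg fun k _ => mul_nonneg (hqnn k) (sq_nonneg _)
  set s := Real.sqrt (varMix h ρ) * |t| with hsdef
  have hs0 : 0 ≤ s := by
    rw [hsdef]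
    exact mul_nonneg (Real.sqrt_nonneg _) (abs_nonneg _)
  have hs2 : s^2 = varMix h ρ * t^2 := by
    rw [hsdef, mul_pow, Real.sq_sqrt hvarnn, _root_.sq_abs]
  -- the amplitude
  set a := tr (ρ ∘L U) with hadef
  -- amplitude in h eigenbasis
  have hae : a = ∑ k, (q k : ℂ) * Complex.exp (-(Complex.I * t * E k)) := by
    rw [hadef, fb_tr_eq_sum e]
    congr 1; ext k
    rw [ContinuousLinearMap.comp_apply, hUdef, fb_timeEv_eigen h t (E k) (e k) (heE k),
      map_smul, inner_smul_right, hqc k]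
    ring
  -- step 2 : Re (phase * a) = ∑ q cos
  have hra : (Complex.exp (Complex.I * Ebar * t) * a).re
      = ∑ k, q k * Real.cos ((Ebar - E k) * t) := by
    rw [hae, Finset.mul_sum, Complex.re_sum]
    congr 1; ext k
    rw [show Complex.exp (Complex.I * Ebar * t) * ((q k : ℂ) * Complex.exp (-(Complex.I * t * E k)))
        = (q k : ℂ) * Complex.exp ((((Ebar - E k) * t : ℝ) : ℂ) * Complex.I) by
      rw [mul_comm ((q k : ℂ)) _, ← mul_assoc, mul_comm _ ((q k : ℂ)), mul_assoc,
        ← Complex.exp_add]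
      congr 2
      push_cast; ring]
    rw [Complex.re_ofReal_mul, Complex.exp_ofReal_mul_I_re]
  have hcos : Real.cos s ≤ (Complex.exp (Complex.I * Ebar * t) * a).re := by
    rw [hra]
    apply fb_weighted_cos q (fun k => (Ebar - E k) * t) hqnn hq1 hs0 (by rw [hsdef] at ht ⊢; exact ht)
    rw [hs2, hvarq, Finset.sum_mul]
    congr 1; ext k; ring
  have hcosnn : 0 ≤ Real.cos s := Real.cos_nonneg_of_mem_Icc ⟨by linarith, ht⟩
  have habs : Real.cos s ≤ ‖a‖ := by
    calc Real.cos s ≤ (Complex.exp (Complex.I * Ebar * t) * a).re := hcos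
    _ ≤ ‖Complex.exp (Complex.I * Ebar * t) * a‖ := Complex.re_le_norm _
    _ = ‖a‖ := by
      rw [norm_mul, show Complex.I * (Ebar : ℂ) * (t : ℝ) = ((Ebar * t : ℝ) : ℂ) * Complex.I by
        push_cast; ring, Complex.norm_exp_ofReal_mul_I, one_mul]
  -- step 1 : survPMix ≥ |a|^2
  have hps : ∀ i, 0 ≤ p i := by
    intro i
    have h0 := hρpos.inner_nonneg_right (v i)
    rw [hvp i, inner_smul_right, hvnorm i, mul_one] at h0
    simpa using h0
  have hp1 : ∑ i, p i = 1 := by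
    have h2 := congrArg Complex.re (fb_tr_eq_sum v ρ).symm
    rw [Complex.re_sum, hρtr] at h2
    have h3 : ∀ i, (⟪v i, ρ (v i)⟫_ℂ).re = p i := by
      intro i
      rw [hvp i, inner_smul_right, hvnorm i, mul_one]
      simp
    rw [Finset.sum_congr rfl (fun i _ => h3 i)] at h2
    simpa using h2
  have hPP : ∀ x : H, Pr (Pr x) = Pr x := by
    intro x
    have hx := ContinuousLinearMap.ext_iff.1 hPrid x
    rwa [ContinuousLinearMap.mul_apply] at hx
  have hfix : ∀ i, p i ≠ 0 → Pr (v i) = v i := by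
    intro i hpi
    have hmem : v i ∈ LinearMap.range ρ.toLinearMap := by
      refine ⟨((p i : ℂ))⁻¹ • v i, ?_⟩
      have : ρ (((p i : ℂ))⁻¹ • v i) = v i := by
        rw [map_smul, hvp i, smul_smul, inv_mul_cancel₀ (by exact_mod_cast hpi), one_smul]
      exact this
    rw [← hPrrange] at hmem
    obtain ⟨w, hw⟩ := hmem
    rw [← hw]
    exact hPP w
  have hsurv : survPMix h ρ Pr t = ∑ i, p i * ‖Pr (U (v i))‖^2 := by
    rw [survPMix]
    have hassoc : Pr ∘L timeEv h t ∘L ρ ∘L timeEv h (-t)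
        = (Pr ∘L (timeEv h t ∘L ρ)) ∘L timeEv h (-t) := by
      ext x; rfl
    rw [hassoc, fb_tr_comp_comm, fb_tr_eq_sum v]
    rw [Complex.re_sum]
    congr 1; ext i
    have : ⟪v i, (timeEv h (-t) ∘L Pr ∘L (timeEv h t ∘L ρ)) (v i)⟫_ℂ
        = (p i : ℂ) * (‖Pr (U (v i))‖^2 : ℝ) := by
      rw [ContinuousLinearMap.comp_apply, ContinuousLinearMap.comp_apply,
        ContinuousLinearMap.comp_apply, hvp i, map_smul, map_smul, map_smul,
        inner_smul_right]
      congr 1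
      rw [fb_timeEv_adjoint_inner h hsa t, ← hUdef]
      calc ⟪U (v i), Pr (U (v i))⟫_ℂ = ⟪U (v i), Pr (Pr (U (v i)))⟫_ℂ := by
            rw [hPP]
        _ = ⟪Pr (U (v i)), Pr (U (v i))⟫_ℂ := by rw [← hPrs]
        _ = (‖Pr (U (v i))‖^2 : ℝ) := by
            rw [inner_self_eq_norm_sq_to_K]; norm_cast
    rw [this, ← Complex.ofReal_mul, Complex.ofReal_re]
  -- bound |a| by sum
  have haineq : ‖a‖ ≤ ∑ i, p i * ‖Pr (U (v i))‖ := by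
    have hav : a = ∑ i, (p i : ℂ) * ⟪v i, U (v i)⟫_ℂ := by
      rw [hadef, fb_tr_eq_sum v]
      congr 1; ext i
      rw [ContinuousLinearMap.comp_apply, ← hρs (v i) (U (v i)), hvp i, inner_smul_left,
        Complex.conj_ofReal]
    rw [hav]
    refine le_trans (norm_sum_le _ _) (Finset.sum_le_sum ?_)
    intro i _
    rw [norm_mul, Complex.norm_real, Real.norm_eq_abs, _root_.abs_of_nonneg (hps i)]
    rcases eq_or_ne (p i) 0 with h0 | h0
    · simp [h0]
    apply mul_le_mul_of_nonneg_left _ (hps i)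
    have hb : ‖⟪v i, Pr (U (v i))⟫_ℂ‖ ≤ ‖Pr (U (v i))‖ := by
      have hb2 := norm_inner_le_norm (𝕜 := ℂ) (v i) (Pr (U (v i)))
      rw [hvnorm' i, one_mul] at hb2
      exact hb2
    rw [← hfix i h0, hPrs, hfix i h0]
    exact hb
  -- Cauchy-Schwarz
  have hcs : (∑ i, p i * ‖Pr (U (v i))‖)^2 ≤ ∑ i, p i * ‖Pr (U (v i))‖^2 := by
    have := Finset.sum_mul_sq_le_sq_mul_sq Finset.univ
      (fun i => Real.sqrt (p i)) (fun i => Real.sqrt (p i) * ‖Pr (U (v i))‖)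
    have hl : ∀ i, Real.sqrt (p i) * (Real.sqrt (p i) * ‖Pr (U (v i))‖)
        = p i * ‖Pr (U (v i))‖ := by
      intro i; rw [← mul_assoc, Real.mul_self_sqrt (hps i)]
    have hr1 : ∀ i, Real.sqrt (p i)^2 = p i := fun i => Real.sq_sqrt (hps i)
    have hr2 : ∀ i, (Real.sqrt (p i) * ‖Pr (U (v i))‖)^2 = p i * ‖Pr (U (v i))‖^2 := by
      intro i; rw [mul_pow, hr1]
    simp only [hl, hr1, hr2] at this
    rw [hp1, one_mul] at this
    exact this
  -- finish
  have hfinal : Real.cos s ^ 2 ≤ survPMix h ρ Pr t := by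
    rw [hsurv]
    have h1 : Real.cos s ^ 2 ≤ ‖a‖^2 := pow_le_pow_left₀ hcosnn habs 2
    have h2 : ‖a‖^2 ≤ (∑ i, p i * ‖Pr (U (v i))‖)^2 :=
      pow_le_pow_left₀ (norm_nonneg _) haineq 2
    linarith [hcs]
  have hgoal : Real.cos (Real.sqrt (varMix h ρ) * t) ^ 2 = Real.cos s ^ 2 := by
    rw [hsdef, ← Real.cos_abs (Real.sqrt (varMix h ρ) * t), abs_mul,
      _root_.abs_of_nonneg (Real.sqrt_nonneg _)]
  rw [ge_iff_le, hgoal]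
  exact hfinal
end
end
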